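/- Let n ≥ 1 be an integer, let 0 < p < 1 and 0 < t < 1, and let λ = n − α < 0 (i.e. α > n) satisfy 1/p + 1/t + λ/n = 2. Then there exists a constant N = N(n, α, p) > 0 such that for all nonnegative measurable functions f with ∫_{ℝⁿ}|f|^p dx < ∞ and g with ∫_{ℝⁿ}|g|^t dx < ∞ one has ∫_{ℝⁿ}∫_{ℝⁿ} f(x)|x−y|^{α−n} g(y) dx dy ≥ N · (∫_{ℝⁿ}|f|^p dx)^{1/p} · (∫_{ℝⁿ}|g|^t dx)^{1/t}. -/

import Mathlib

open MeasureTheory ENNReal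

section ReversedHLSAux
open Set Metric

lemma geom_le_of_le {X Y Z : ℝ≥0∞} {θ : ℝ} (h0 : 0 < θ) (h1 : θ < 1)
    (hX : X ≤ Z) (hY : Y ≤ Z) : X ^ θ * Y ^ (1 - θ) ≤ Z := by
  rcases eq_top_or_lt_top Z with rfl | hZt
  · exact le_top
  rcases eq_or_ne Z 0 with rfl | hZ0
  · have hX0 : X = 0 := le_antisymm hX zero_le
    have hY0 : Y = 0 := le_antisymm hY zero_le
    simp [hX0, hY0, ENNReal.zero_rpow_of_pos h0]
  · calc X ^ θ * Y ^ (1 - θ) ≤ Z ^ θ * Z ^ (1 - θ) :=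
          mul_le_mul' (ENNReal.rpow_le_rpow hX h0.le) (ENNReal.rpow_le_rpow hY (by linarith))
    _ = Z ^ (θ + (1 - θ)) := (ENNReal.rpow_add _ _ hZ0 hZt.ne).symm
    _ = Z := by norm_num

lemma peel {Z : Type*} [MeasurableSpace Z] (ν : Measure Z) [SFinite ν]
    (φ : Z → ℝ) (hφ : Measurable φ) (hφ0 : ∀ z, 0 ≤ φ z)
    (h : Z → ℝ≥0∞) (hh : Measurable h) :
    ∫⁻ z, ENNReal.ofReal (φ z) * h z ∂ν
      = ∫⁻ s in Ioi (0:ℝ), ∫⁻ z in {z | s < φ z}, h z ∂ν := by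
  have key : ∀ z, ENNReal.ofReal (φ z)
      = ∫⁻ s in Ioi (0:ℝ), (Iio (φ z)).indicator (fun _ => (1:ℝ≥0∞)) s := by
    intro z
    rw [lintegral_indicator measurableSet_Iio, setLIntegral_one,
      Measure.restrict_apply measurableSet_Iio]
    rw [show Iio (φ z) ∩ Ioi 0 = Ioo 0 (φ z) by ext s; simp [and_comm], Real.volume_Ioo, sub_zero]
  calc ∫⁻ z, ENNReal.ofReal (φ z) * h z ∂ν
      = ∫⁻ z, (∫⁻ s in Ioi (0:ℝ), (Iio (φ z)).indicator (fun _ => (1:ℝ≥0∞)) s) * h z ∂ν := by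
        apply lintegral_congr; intro z
        rw [key z]
    _ = ∫⁻ z, (∫⁻ s in Ioi (0:ℝ), (Iio (φ z)).indicator (fun _ => (1:ℝ≥0∞)) s * h z) ∂ν := by
        apply lintegral_congr; intro z
        exact (lintegral_mul_const _ (measurable_one.indicator measurableSet_Iio)).symm
    _ = ∫⁻ s in Ioi (0:ℝ), ∫⁻ z, (Iio (φ z)).indicator (fun _ => (1:ℝ≥0∞)) s * h z ∂ν := by
        apply lintegral_lintegral_swap
        apply Measurable.aemeasurable
        have hset : MeasurableSet {q : Z × ℝ | q.2 < φ q.1} :=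
          measurableSet_lt measurable_snd (hφ.comp measurable_fst)
        have huncurry : (Function.uncurry fun z s =>
              (Iio (φ z)).indicator (fun _ => (1:ℝ≥0∞)) s * h z)
            = fun q : Z × ℝ => {q : Z × ℝ | q.2 < φ q.1}.indicator (fun _ => 1) q * h q.1 := by
          ext q
          by_cases hq : q.2 < φ q.1 <;> simp [Function.uncurry, Set.indicator, hq]
        rw [huncurry]
        exact (measurable_const.indicator hset).mul (hh.comp measurable_fst)
    _ = ∫⁻ s in Ioi (0:ℝ), ∫⁻ z in {z | s < φ z}, h z ∂ν := by
        apply lintegral_congr_ae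
        apply Filter.Eventually.of_forall
        intro s
        dsimp only
        rw [← lintegral_indicator (measurableSet_lt measurable_const hφ)]
        apply lintegral_congr; intro z
        by_cases hz : s < φ z <;> simp [Set.indicator, hz, Set.mem_Iio]


lemma kernel_set_bound (n : ℕ) (hn : 1 ≤ n) {β : ℝ} (hβ : 0 < β) :
    ∃ c : ℝ, 0 < c ∧ ∀ (y : EuclideanSpace ℝ (Fin n)) (S : Set (EuclideanSpace ℝ (Fin n))),
      ENNReal.ofReal c * (volume S) ^ (1 + β / (n:ℝ)) ≤
        ∫⁻ x in S, ENNReal.ofReal (dist x y ^ β) := by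
  have hn' : (0:ℝ) < n := by exact_mod_cast hn
  set ω : ℝ := (volume (ball (0 : EuclideanSpace ℝ (Fin n)) 1)).toReal with hω
  have hωpos : 0 < ω :=
    ENNReal.toReal_pos (measure_ball_pos _ _ one_pos).ne' measure_ball_lt_top.ne
  refine ⟨(1/2) * (2*ω) ^ (-(β/(n:ℝ))), by positivity, fun y S => ?_⟩
  set V := volume S with hV
  rcases eq_or_ne V 0 with hV0 | hV0
  · rw [hV0, ENNReal.zero_rpow_of_pos (by positivity), mul_zero]; exact zero_le
  rcases eq_or_ne V ⊤ with hVt | hVt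
  · -- infinite measure: RHS is infinite
    have hBfin : volume (ball y 1) ≠ ⊤ := measure_ball_lt_top.ne
    have hdiff : volume (S \ ball y 1) = ⊤ := by
      by_contra hne
      have h2 := (measure_inter_add_diff (μ := volume) S
        (measurableSet_ball (x := y) (ε := 1))).trans hVt
      exact (ENNReal.add_ne_top.2 ⟨(lt_of_le_of_lt (measure_mono inter_subset_right)
        measure_ball_lt_top).ne, hne⟩) h2
    have hpt : ∀ x, ((ball y 1)ᶜ).indicator (fun _ => (1:ℝ≥0∞)) x
        ≤ ENNReal.ofReal (dist x y ^ β) := by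
      intro x
      by_cases hx : x ∈ (ball y 1)ᶜ
      · have hd : 1 ≤ dist x y := by
          simpa [mem_ball, not_lt] using hx
        rw [Set.indicator_of_mem hx]
        rw [show (1:ℝ≥0∞) = ENNReal.ofReal ((1:ℝ)^β) by simp]
        exact ENNReal.ofReal_le_ofReal (Real.rpow_le_rpow zero_le_one hd hβ.le)
      · rw [Set.indicator_of_notMem hx]; exact zero_le
    have : (⊤:ℝ≥0∞) ≤ ∫⁻ x in S, ENNReal.ofReal (dist x y ^ β) := by
      calc (⊤:ℝ≥0∞) = volume (S \ ball y 1) := hdiff.symm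
        _ = ∫⁻ x in S, ((ball y 1)ᶜ).indicator (fun _ => (1:ℝ≥0∞)) x := by
            rw [lintegral_indicator measurableSet_ball.compl, setLIntegral_one,
              Measure.restrict_apply measurableSet_ball.compl, Set.inter_comm, ← Set.diff_eq]
        _ ≤ ∫⁻ x in S, ENNReal.ofReal (dist x y ^ β) := lintegral_mono hpt
    exact le_top.trans this
  -- main case : 0 < V < ∞
  have hV' : 0 < V.toReal := ENNReal.toReal_pos hV0 hVt
  set r : ℝ := (V.toReal / (2*ω)) ^ ((n:ℝ)⁻¹) with hr
  have hrpos : 0 < r := Real.rpow_pos_of_pos (by positivity) _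
  have hball : volume (ball y r) = V / 2 := by
    rw [Measure.addHaar_ball_of_pos _ y hrpos, finrank_euclideanSpace_fin]
    have : r ^ (n : ℕ) = V.toReal / (2*ω) := by
      rw [← Real.rpow_natCast r n, hr, ← Real.rpow_mul (by positivity)]
      rw [inv_mul_cancel₀ (by exact_mod_cast hn'.ne')]
      exact Real.rpow_one _
    rw [this, show (volume (ball (0 : EuclideanSpace ℝ (Fin n)) 1)) = ENNReal.ofReal ω from
      (ENNReal.ofReal_toReal measure_ball_lt_top.ne).symm]
    rw [← ENNReal.ofReal_mul (by positivity), div_mul_eq_mul_div, mul_comm (2:ℝ) ω,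
      ← div_div, mul_div_assoc, div_self hωpos.ne', mul_one,
      ENNReal.ofReal_div_of_pos two_pos, ENNReal.ofReal_toReal hVt, ENNReal.ofReal_ofNat]
  have hdiff : V / 2 ≤ volume (S \ ball y r) := by
    have h1 : V - V/2 ≤ volume (S \ ball y r) := hball ▸ le_measure_diff
    rwa [ENNReal.sub_half hVt] at h1
  have hpt : ∀ x, ((ball y r)ᶜ).indicator (fun _ => ENNReal.ofReal (r ^ β)) x
      ≤ ENNReal.ofReal (dist x y ^ β) := by
    intro x
    by_cases hx : x ∈ (ball y r)ᶜ
    · have hd : r ≤ dist x y := by simpa [mem_ball, not_lt] using hx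
      rw [Set.indicator_of_mem hx]
      exact ENNReal.ofReal_le_ofReal (Real.rpow_le_rpow hrpos.le hd hβ.le)
    · rw [Set.indicator_of_notMem hx]; exact zero_le
  have key : ENNReal.ofReal (r ^ β) * (V / 2) ≤ ∫⁻ x in S, ENNReal.ofReal (dist x y ^ β) := by
    calc ENNReal.ofReal (r ^ β) * (V / 2)
        ≤ ENNReal.ofReal (r ^ β) * volume (S \ ball y r) := by
          exact mul_le_mul_right hdiff _
      _ = ∫⁻ x in S, ((ball y r)ᶜ).indicator (fun _ => ENNReal.ofReal (r ^ β)) x := by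
          rw [lintegral_indicator measurableSet_ball.compl, setLIntegral_const,
            Measure.restrict_apply measurableSet_ball.compl, Set.inter_comm, ← Set.diff_eq]
      _ ≤ _ := lintegral_mono hpt
  refine le_trans (le_of_eq ?_) key
  -- algebraic identity
  have hVr : V = ENNReal.ofReal V.toReal := (ENNReal.ofReal_toReal hVt).symm
  have hrβ : r ^ β = V.toReal ^ (β/(n:ℝ)) * (2*ω) ^ (-(β/(n:ℝ))) := by
    rw [hr, ← Real.rpow_mul (by positivity), inv_mul_eq_div,
      Real.div_rpow hV'.le (by positivity), Real.rpow_neg (by positivity), div_eq_mul_inv]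
  rw [hrβ, ENNReal.ofReal_mul (by positivity), ENNReal.ofReal_mul (by positivity),
    ENNReal.rpow_add_of_nonneg 1 (β/(n:ℝ)) zero_le_one (by positivity), ENNReal.rpow_one]
  have hVe : V ^ (β/(n:ℝ)) = ENNReal.ofReal (V.toReal ^ (β/(n:ℝ))) := by
    conv_lhs => rw [hVr]
    exact ENNReal.ofReal_rpow_of_nonneg ENNReal.toReal_nonneg (by positivity)
  rw [hVe, show ENNReal.ofReal ((1:ℝ)/2) = 2⁻¹ by
    rw [one_div, ENNReal.ofReal_inv_of_pos two_pos, ENNReal.ofReal_ofNat],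
    ENNReal.div_eq_inv_mul]
  ring


-- solve `ofReal s * u ^ δ ≤ C` for `u`
lemma solve_pow {u C : ℝ≥0∞} {s δ : ℝ} (hs : 0 < s) (hδ : 0 < δ)
    (h : ENNReal.ofReal s * u ^ δ ≤ C) :
    u ≤ C ^ δ⁻¹ * ENNReal.ofReal (s ^ (-δ⁻¹)) := by
  have key : u = (ENNReal.ofReal s * u ^ δ) ^ δ⁻¹ * ENNReal.ofReal (s ^ (-δ⁻¹)) := by
    rw [ENNReal.mul_rpow_of_nonneg _ _ (by positivity), ← ENNReal.rpow_mul,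
      mul_inv_cancel₀ hδ.ne', ENNReal.rpow_one, ENNReal.ofReal_rpow_of_pos hs,
      mul_comm (ENNReal.ofReal (s ^ δ⁻¹)), mul_assoc,
      ← ENNReal.ofReal_mul (by positivity), ← Real.rpow_add hs]
    simp
  rw [key]
  exact mul_le_mul_left (ENNReal.rpow_le_rpow h (by positivity)) _

set_option maxHeartbeats 2000000 in
lemma one_var_bound {p γ : ℝ} (hp0 : 0 < p) (hp1 : p < 1) (hγ : 1/p < γ) :
    ∃ c : ℝ, 0 < c ∧ ∀ {X : Type} [MeasurableSpace X] (μ : Measure X) (f : X → ℝ),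
      Measurable f → (∀ x, 0 ≤ f x) →
      ENNReal.ofReal c * (∫⁻ x, ENNReal.ofReal (f x) ^ p ∂μ) ^ (1/p) ≤
        (∫⁻ s in Ioi (0:ℝ), (μ {x | s < f x}) ^ γ) ^ ((1/p-1)/(γ-1)) *
        (∫⁻ s in Ioi (0:ℝ), μ {x | s < f x}) ^ (1 - (1/p-1)/(γ-1)) := by
  have h1p : 1 < 1/p := by rw [lt_div_iff₀ hp0]; linarith
  have hγ1 : 1 < γ := h1p.trans hγ
  have hγ0 : 0 < γ := by linarith
  have hpγ : 1/γ < p := by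
    rw [div_lt_iff₀ hγ0, mul_comm]
    exact (div_lt_iff₀ hp0).1 hγ
  set θ : ℝ := (1/p-1)/(γ-1) with hθdef
  have hθ0 : 0 < θ := by apply div_pos <;> linarith
  have hθ1 : θ < 1 := by rw [div_lt_one (by linarith)]; linarith
  set K : ℝ := p * (1/(p - 1/γ) + 1/(1-p)) with hKdef
  have hK0 : 0 < K := mul_pos hp0
    (add_pos (one_div_pos.2 (by linarith)) (one_div_pos.2 (by linarith)))
  refine ⟨K ^ (-(1/p)), Real.rpow_pos_of_pos hK0 _, ?_⟩
  intro X mX μ f hf hf0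
  set φ : ℝ → ℝ≥0∞ := fun s => μ {x | s < f x} with hφdef
  have hφanti : Antitone φ := fun s₁ s₂ h =>
    measure_mono (fun x hx => lt_of_le_of_lt h hx)
  set A : ℝ≥0∞ := ∫⁻ s in Ioi (0:ℝ), φ s ^ γ with hAdef
  set F : ℝ≥0∞ := ∫⁻ s in Ioi (0:ℝ), φ s with hFdef
  -- lower bounds coming from antitonicity
  have hlow : ∀ {ψ : ℝ → ℝ≥0∞}, Antitone ψ → ∀ s, 0 < s →
      ENNReal.ofReal s * ψ s ≤ ∫⁻ u in Ioi (0:ℝ), ψ u := by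
    intro ψ hψ s hs
    calc ENNReal.ofReal s * ψ s = ψ s * volume (Ioo (0:ℝ) s) := by
          rw [Real.volume_Ioo, sub_zero, mul_comm]
      _ = ∫⁻ u in Ioo (0:ℝ) s, ψ s := (setLIntegral_const _ _).symm
      _ ≤ ∫⁻ u in Ioo (0:ℝ) s, ψ u :=
          setLIntegral_mono' measurableSet_Ioo (fun u hu => hψ hu.2.le)
      _ ≤ ∫⁻ u in Ioi (0:ℝ), ψ u :=
          lintegral_mono_set (fun u hu => hu.1)
  have hlowF : ∀ s, 0 < s → ENNReal.ofReal s * φ s ≤ F := hlow hφanti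
  have hlowA : ∀ s, 0 < s → ENNReal.ofReal s * φ s ^ γ ≤ A :=
    hlow (fun s₁ s₂ h => ENNReal.rpow_le_rpow (hφanti h) hγ0.le)
  -- trivial case : F = 0
  rcases eq_or_ne F 0 with hF0 | hF0
  · have hφ0 : ∀ s, 0 < s → φ s = 0 := by
      intro s hs
      have := (hlowF s hs).trans_eq hF0
      simpa [mul_eq_zero, ENNReal.ofReal_eq_zero, not_le.2 hs] using this
    have hnull : μ {x | 0 < f x} = 0 := by
      have hU : {x | 0 < f x} = ⋃ k : ℕ, {x | 1/((k:ℝ)+1) < f x} := by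
        ext x
        simp only [mem_setOf_eq, mem_iUnion]
        constructor
        · intro hx; exact exists_nat_one_div_lt hx
        · rintro ⟨k, hk⟩; exact lt_trans (by positivity) hk
      rw [hU]
      exact measure_iUnion_null (fun k => hφ0 _ (by positivity))
    have hzero : ∫⁻ x, ENNReal.ofReal (f x) ^ p ∂μ = 0 := by
      rw [lintegral_eq_zero_iff (hf.ennreal_ofReal.pow measurable_const)]
      filter_upwards [measure_eq_zero_iff_ae_notMem.1 hnull] with x hx
      have : f x = 0 := le_antisymm (not_lt.1 hx) (hf0 x)
      simp [this, ENNReal.zero_rpow_of_pos hp0]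
    rw [hzero, ENNReal.zero_rpow_of_pos (by positivity), mul_zero]
    exact zero_le
  -- A = 0 is impossible now
  have hA0 : A ≠ 0 := by
    intro hA
    apply hF0
    have hφz : ∀ s, 0 < s → φ s = 0 := by
      intro s hs
      have := (hlowA s hs).trans_eq hA
      have h2 : φ s ^ γ = 0 := by
        simpa [mul_eq_zero, ENNReal.ofReal_eq_zero, not_le.2 hs] using this
      simpa [ENNReal.rpow_eq_zero_iff, hγ0, not_lt.2 hγ0.le] using h2
    rw [hFdef]
    rw [setLIntegral_congr_fun measurableSet_Ioi
      (fun s hs => hφz s hs)]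
    simp
  -- infinite cases
  rcases eq_or_ne A ⊤ with hAt | hAt
  · refine le_top.trans (le_of_eq ?_)
    rw [hAt, ENNReal.top_rpow_of_pos hθ0, ENNReal.top_mul]
    simp only [ne_eq, ENNReal.rpow_eq_zero_iff, not_or, not_and, not_lt]
    constructor
    · intro h; exact absurd h hF0
    · intro h; linarith
  rcases eq_or_ne F ⊤ with hFt | hFt
  · refine le_top.trans (le_of_eq ?_)
    rw [hFt, ENNReal.top_rpow_of_pos (by linarith), ENNReal.mul_top]
    simp only [ne_eq, ENNReal.rpow_eq_zero_iff, not_or, not_and, not_lt]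
    constructor
    · intro h; exact absurd h hA0
    · intro h; linarith
  -- main case
  have hA' : 0 < A.toReal := ENNReal.toReal_pos hA0 hAt
  have hF' : 0 < F.toReal := ENNReal.toReal_pos hF0 hFt
  set LA : ℝ := Real.log A.toReal with hLA
  set LF : ℝ := Real.log F.toReal with hLF
  set S : ℝ := Real.exp ((γ*LF - LA)/(γ-1)) with hSdef
  have hS : 0 < S := Real.exp_pos _
  set M : ℝ := A.toReal ^ θ * F.toReal ^ (1-θ) with hMdef
  have hM : 0 < M := by positivity
  -- the two crucial real identities
  have hid1 : A.toReal ^ (1/γ) * S ^ (p - 1/γ) = M ^ p := by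
    rw [hMdef, Real.rpow_def_of_pos hA', Real.rpow_def_of_pos hS,
      Real.rpow_def_of_pos (by positivity), Real.log_mul (by positivity) (by positivity),
      Real.log_rpow hA', Real.log_rpow hF', ← Real.exp_add, hSdef, Real.log_exp]
    congr 1
    simp only [hθdef, hLA, hLF]
    field_simp [hγ0.ne', sub_ne_zero.2 hγ1.ne', hp0.ne']
    ring
  have hid2 : F.toReal * S ^ (p - 1) = M ^ p := by
    rw [hMdef, Real.rpow_def_of_pos hS,
      Real.rpow_def_of_pos (by positivity), Real.log_mul (by positivity) (by positivity),
      Real.log_rpow hA', Real.log_rpow hF', hSdef, Real.log_exp]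
    conv_lhs => rw [show F.toReal = Real.exp LF from (Real.exp_log hF').symm]
    rw [← Real.exp_add]
    congr 1
    simp only [hθdef, hLA, hLF]
    field_simp [hγ0.ne', sub_ne_zero.2 hγ1.ne', hp0.ne']
    ring
  -- pointwise bounds on the two regions
  have hmeas_rpow : ∀ e : ℝ, Measurable fun t : ℝ => ENNReal.ofReal (t ^ e) :=
    fun e => (measurable_id.pow measurable_const).ennreal_ofReal
  have hbA : ∀ t ∈ Ioc (0:ℝ) S, φ t * ENNReal.ofReal (t^(p-1))
      ≤ A ^ (1/γ) * ENNReal.ofReal (t ^ (p - 1/γ - 1)) := by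
    intro t ht
    have h1 : φ t ≤ A ^ γ⁻¹ * ENNReal.ofReal (t ^ (-γ⁻¹)) :=
      solve_pow ht.1 hγ0 (hlowA t ht.1)
    calc φ t * ENNReal.ofReal (t^(p-1))
        ≤ A ^ γ⁻¹ * ENNReal.ofReal (t ^ (-γ⁻¹)) * ENNReal.ofReal (t^(p-1)) :=
          mul_le_mul_left h1 _
      _ = A ^ (1/γ) * ENNReal.ofReal (t ^ (p - 1/γ - 1)) := by
          rw [mul_assoc, ← ENNReal.ofReal_mul (Real.rpow_nonneg ht.1.le _),
            ← Real.rpow_add ht.1, one_div]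
          congr 2
          ring
  have hbF : ∀ t ∈ Ioi S, φ t * ENNReal.ofReal (t^(p-1))
      ≤ F * ENNReal.ofReal (t ^ (p - 2)) := by
    intro t ht
    have ht0 : (0:ℝ) < t := hS.trans ht
    have h0 : ENNReal.ofReal t * φ t ^ (1:ℝ) ≤ F := by
      rw [ENNReal.rpow_one]; exact hlowF t ht0
    have h1 := solve_pow ht0 one_pos h0
    rw [inv_one, ENNReal.rpow_one] at h1
    calc φ t * ENNReal.ofReal (t^(p-1))
        ≤ F * ENNReal.ofReal (t ^ (-1:ℝ)) * ENNReal.ofReal (t^(p-1)) :=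
          mul_le_mul_left h1 _
      _ = F * ENNReal.ofReal (t ^ (p - 2)) := by
          rw [mul_assoc, ← ENNReal.ofReal_mul (Real.rpow_nonneg ht0.le _),
            ← Real.rpow_add ht0]
          congr 2
          ring
  -- values of the two elementary integrals
  have he1 : (-1:ℝ) < p - 1/γ - 1 := by linarith [hpγ]
  have hI1 : ∫⁻ t in Ioc (0:ℝ) S, ENNReal.ofReal (t ^ (p - 1/γ - 1))
      = ENNReal.ofReal (S^(p-1/γ)/(p-1/γ)) := by
    have hint : IntegrableOn (fun t : ℝ => t ^ (p - 1/γ - 1)) (Ioc 0 S) volume :=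
      (intervalIntegral.intervalIntegrable_rpow' he1).1
    rw [← ofReal_integral_eq_lintegral_ofReal hint
      ((ae_restrict_iff' measurableSet_Ioc).2 (Filter.Eventually.of_forall
        (fun t ht => Real.rpow_nonneg ht.1.le _)))]
    congr 1
    rw [← intervalIntegral.integral_of_le hS.le, integral_rpow (Or.inl he1)]
    rw [Real.zero_rpow (show p - 1/γ - 1 + 1 ≠ 0 by intro h; nlinarith [hpγ])]
    rw [sub_zero]
    congr 1 <;> ring
  have hI2 : ∫⁻ t in Ioi S, ENNReal.ofReal (t ^ (p - 2))
      = ENNReal.ofReal (S^(p-1)/(1-p)) := by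
    have hlt : p - 2 < -1 := by linarith
    have hint : IntegrableOn (fun t : ℝ => t ^ (p - 2)) (Ioi S) volume :=
      integrableOn_Ioi_rpow_of_lt hlt hS
    rw [← ofReal_integral_eq_lintegral_ofReal hint
      ((ae_restrict_iff' measurableSet_Ioi).2 (Filter.Eventually.of_forall
        (fun t ht => Real.rpow_nonneg (hS.le.trans (le_of_lt ht)) _)))]
    congr 1
    rw [integral_Ioi_rpow_of_lt hlt hS]
    rw [show p - 2 + 1 = p - 1 by ring,
      div_eq_div_iff (show p - 1 ≠ 0 by intro h; nlinarith) (show 1 - p ≠ 0 by intro h; nlinarith)]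
    ring
  -- the layer cake bound
  set P : ℝ≥0∞ := ∫⁻ t in Ioi (0:ℝ), φ t * ENNReal.ofReal (t^(p-1)) with hPdef
  have hPsplit : P = (∫⁻ t in Ioc (0:ℝ) S, φ t * ENNReal.ofReal (t^(p-1)))
      + ∫⁻ t in Ioi S, φ t * ENNReal.ofReal (t^(p-1)) := by
    rw [hPdef, ← Ioc_union_Ioi_eq_Ioi hS.le,
      lintegral_union measurableSet_Ioi Ioc_disjoint_Ioi_same]
  have hAfin : A ^ (1/γ) ≠ ⊤ := ENNReal.rpow_ne_top_of_nonneg (by positivity) hAt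
  have hPbound : P ≤ ENNReal.ofReal ((K/p) * M^p) := by
    rw [hPsplit]
    have h1 : (∫⁻ t in Ioc (0:ℝ) S, φ t * ENNReal.ofReal (t^(p-1)))
        ≤ A ^ (1/γ) * ENNReal.ofReal (S^(p-1/γ)/(p-1/γ)) := by
      rw [← hI1, ← lintegral_const_mul' _ _ hAfin]
      exact setLIntegral_mono' measurableSet_Ioc hbA
    have h2 : (∫⁻ t in Ioi S, φ t * ENNReal.ofReal (t^(p-1)))
        ≤ F * ENNReal.ofReal (S^(p-1)/(1-p)) := by
      rw [← hI2, ← lintegral_const_mul' _ _ hFt]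
      exact setLIntegral_mono' measurableSet_Ioi hbF
    refine le_trans (add_le_add h1 h2) (le_of_eq ?_)
    have hArw : A ^ (1/γ) = ENNReal.ofReal (A.toReal ^ (1/γ)) := by
      conv_lhs => rw [← ENNReal.ofReal_toReal hAt]
      exact ENNReal.ofReal_rpow_of_pos hA'
    have hFrw : F = ENNReal.ofReal F.toReal := (ENNReal.ofReal_toReal hFt).symm
    have hnn1 : (0:ℝ) ≤ A.toReal ^ (1/γ) := Real.rpow_nonneg hA'.le _
    have hpg' : (0:ℝ) < p - 1/γ := by linarith [hpγ]
    have hnn2 : (0:ℝ) ≤ S^(p-1/γ)/(p-1/γ) := div_nonneg (Real.rpow_nonneg hS.le _) hpg'.le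
    have hnn3 : (0:ℝ) ≤ S^(p-1)/(1-p) :=
      div_nonneg (Real.rpow_nonneg hS.le _) (by linarith)
    have hreal : A.toReal ^ (1/γ) * (S^(p-1/γ)/(p-1/γ)) + F.toReal * (S^(p-1)/(1-p))
        = (K/p) * M^p := by
      have e1 : A.toReal ^ (1/γ) * (S^(p-1/γ)/(p-1/γ)) = M^p * (1/(p-1/γ)) := by
        rw [← hid1]; ring
      have e2 : F.toReal * (S^(p-1)/(1-p)) = M^p * (1/(1-p)) := by
        rw [← hid2]; ring
      rw [e1, e2, hKdef, mul_div_cancel_left₀ _ hp0.ne']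
      ring
    rw [hArw, hFrw, ← ENNReal.ofReal_mul hnn1, ← ENNReal.ofReal_mul hF'.le,
      ← ENNReal.ofReal_add (mul_nonneg hnn1 hnn2) (mul_nonneg hF'.le hnn3), hreal]
  have hlayer : ∫⁻ x, ENNReal.ofReal (f x) ^ p ∂μ = ENNReal.ofReal p * P := by
    rw [show (fun x => ENNReal.ofReal (f x) ^ p) = fun x => ENNReal.ofReal (f x ^ p) from
      funext fun x => ENNReal.ofReal_rpow_of_nonneg (hf0 x) hp0.le]
    exact lintegral_rpow_eq_lintegral_meas_lt_mul μ (Filter.Eventually.of_forall hf0)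
      hf.aemeasurable hp0
  have hLbound : (∫⁻ x, ENNReal.ofReal (f x) ^ p ∂μ) ^ (1/p)
      ≤ ENNReal.ofReal (K^(1/p) * M) := by
    have h1 : ∫⁻ x, ENNReal.ofReal (f x) ^ p ∂μ ≤ ENNReal.ofReal (K * M^p) := by
      rw [hlayer]
      calc ENNReal.ofReal p * P ≤ ENNReal.ofReal p * ENNReal.ofReal ((K/p) * M^p) :=
            mul_le_mul_right hPbound _
        _ = ENNReal.ofReal (K * M^p) := by
            rw [← ENNReal.ofReal_mul hp0.le]
            congr 1
            field_simp
    calc (∫⁻ x, ENNReal.ofReal (f x) ^ p ∂μ) ^ (1/p)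
        ≤ (ENNReal.ofReal (K * M^p)) ^ (1/p) := ENNReal.rpow_le_rpow h1 (by positivity)
      _ = ENNReal.ofReal ((K * M^p) ^ (1/p)) :=
          ENNReal.ofReal_rpow_of_pos (by positivity)
      _ = ENNReal.ofReal (K^(1/p) * M) := by
          congr 1
          rw [Real.mul_rpow hK0.le (by positivity), ← Real.rpow_mul hM.le,
            mul_one_div_cancel hp0.ne', Real.rpow_one]
  calc ENNReal.ofReal (K ^ (-(1/p))) * (∫⁻ x, ENNReal.ofReal (f x) ^ p ∂μ) ^ (1/p)
      ≤ ENNReal.ofReal (K ^ (-(1/p))) * ENNReal.ofReal (K^(1/p) * M) :=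
        mul_le_mul_right hLbound _
    _ = ENNReal.ofReal M := by
        rw [← ENNReal.ofReal_mul (by positivity), ← mul_assoc,
          ← Real.rpow_add hK0, neg_add_cancel, Real.rpow_zero, one_mul]
    _ = A ^ θ * F ^ (1-θ) := by
        rw [hMdef, ENNReal.ofReal_mul (by positivity)]
        congr 1
        · conv_rhs => rw [← ENNReal.ofReal_toReal hAt]
          exact (ENNReal.ofReal_rpow_of_pos hA').symm
        · conv_rhs => rw [← ENNReal.ofReal_toReal hFt]
          exact (ENNReal.ofReal_rpow_of_pos hF').symm

end ReversedHLSAux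

section ReversedHLSMain
open Set Metric

set_option maxHeartbeats 4000000 in
/-- **Reversed Hardy-Littlewood-Sobolev inequality** (Theorem 1.1):
for `n ≥ 1`, `0 < p, t < 1` and `λ = n - α < 0` with `1/p + 1/t + λ/n = 2`,
there is a constant `N = N(n, α, p) > 0` such that for all nonnegative
`f ∈ L^p(ℝⁿ)` and `g ∈ L^t(ℝⁿ)`,
`∫∫ f(x) |x-y|^(α-n) g(y) dx dy ≥ N ‖f‖_{L^p} ‖g‖_{L^t}`. -/
theorem reversed_HLS_inequality (n : ℕ) (hn : 1 ≤ n) (p t α : ℝ)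
    (hp0 : 0 < p) (hp1 : p < 1) (ht0 : 0 < t) (ht1 : t < 1)
    (hα : (n : ℝ) < α)
    (hexp : 1 / p + 1 / t + ((n : ℝ) - α) / n = 2) :
    ∃ N : ℝ, 0 < N ∧
      ∀ f g : EuclideanSpace ℝ (Fin n) → ℝ,
        Measurable f → Measurable g →
        (∀ x, 0 ≤ f x) → (∀ x, 0 ≤ g x) →
        Integrable (fun x => |f x| ^ p) → Integrable (fun x => |g x| ^ t) →
        ENNReal.ofReal
            (N * (∫ x, |f x| ^ p) ^ (1 / p) * (∫ x, |g x| ^ t) ^ (1 / t)) ≤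
          ∫⁻ x, ∫⁻ y, ENNReal.ofReal (f x * dist x y ^ (α - n) * g y) := by
  have hn' : (0:ℝ) < n := by exact_mod_cast hn
  have hβ : (0:ℝ) < α - n := by linarith
  set γ : ℝ := 1 + (α - (n:ℝ)) / n with hγdef
  have hγeq : γ = 1/p + 1/t - 1 := by
    have h1 : ((n:ℝ) - α)/n = -((α - n)/n) := by ring
    rw [h1] at hexp
    rw [hγdef]; linarith
  have h1p : 1 < 1/p := by rw [lt_div_iff₀ hp0]; linarith
  have h1t : 1 < 1/t := by rw [lt_div_iff₀ ht0]; linarith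
  have hγp : 1/p < γ := by rw [hγeq]; linarith
  have hγt : 1/t < γ := by rw [hγeq]; linarith
  have hγ1 : 1 < γ := h1p.trans hγp
  set θ : ℝ := (1/p - 1)/(γ - 1) with hθdef
  have hθ0 : 0 < θ := div_pos (by linarith) (by linarith)
  have hθ1 : θ < 1 := by rw [div_lt_one (by linarith)]; linarith
  have hθg : (1/t - 1)/(γ - 1) = 1 - θ := by
    rw [hθdef, eq_sub_iff_add_eq, ← add_div, div_eq_one_iff_eq (by linarith : γ - 1 ≠ 0)]
    linarith
  obtain ⟨c₁, hc₁, hker⟩ := kernel_set_bound n hn hβ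
  obtain ⟨c₂, hc₂, hone⟩ := one_var_bound hp0 hp1 hγp
  obtain ⟨c₃, hc₃, htwo⟩ := one_var_bound ht0 ht1 hγt
  refine ⟨c₁ * c₂ * c₃, by positivity, ?_⟩
  intro f g hf hg hf0 hg0 hfi hgi
  set μ : Measure (EuclideanSpace ℝ (Fin n)) := volume with hμdef
  have hKm : Measurable (fun z : EuclideanSpace ℝ (Fin n) × EuclideanSpace ℝ (Fin n) =>
      ENNReal.ofReal (dist z.1 z.2 ^ (α - (n:ℝ)))) :=
    (measurable_dist.pow measurable_const).ennreal_ofReal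
  have hmfst : Measurable (fun z : EuclideanSpace ℝ (Fin n) × EuclideanSpace ℝ (Fin n) =>
      f z.1) := by exact hf.comp measurable_fst
  have hmsnd : Measurable (fun z : EuclideanSpace ℝ (Fin n) × EuclideanSpace ℝ (Fin n) =>
      g z.2) := by exact hg.comp measurable_snd
  have hFGm : Measurable (fun z : EuclideanSpace ℝ (Fin n) × EuclideanSpace ℝ (Fin n) =>
      ENNReal.ofReal (f z.1) *
        (ENNReal.ofReal (dist z.1 z.2 ^ (α - (n:ℝ))) * ENNReal.ofReal (g z.2))) :=
    hmfst.ennreal_ofReal.mul (hKm.mul hmsnd.ennreal_ofReal)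
  set I : ℝ≥0∞ := ∫⁻ x, ∫⁻ y, ENNReal.ofReal (f x * dist x y ^ (α - (n:ℝ)) * g y) ∂μ ∂μ
    with hIdef
  set Es : ℝ → Set (EuclideanSpace ℝ (Fin n)) := fun s => {x | s < f x} with hEsdef
  set Fu : ℝ → Set (EuclideanSpace ℝ (Fin n)) := fun u => {y | u < g y} with hFudef
  set Af : ℝ≥0∞ := ∫⁻ s in Ioi (0:ℝ), (μ (Es s)) ^ γ with hAfdef
  set Ff : ℝ≥0∞ := ∫⁻ s in Ioi (0:ℝ), μ (Es s) with hFfdef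
  set Ag : ℝ≥0∞ := ∫⁻ u in Ioi (0:ℝ), (μ (Fu u)) ^ γ with hAgdef
  set Fg : ℝ≥0∞ := ∫⁻ u in Ioi (0:ℝ), μ (Fu u) with hFgdef
  have hEsanti : Antitone (fun s => μ (Es s)) := fun s₁ s₂ h =>
    measure_mono (fun x hx => lt_of_le_of_lt h hx)
  have hFuanti : Antitone (fun u => μ (Fu u)) := fun s₁ s₂ h =>
    measure_mono (fun x hx => lt_of_le_of_lt h hx)
  have hEsm : Measurable (fun s => μ (Es s)) := hEsanti.measurable
  have hFum : Measurable (fun u => μ (Fu u)) := hFuanti.measurable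
  -- Step C : identify I with the double level-set integral
  have hprod : I = ∫⁻ z, ENNReal.ofReal (f z.1) *
      (ENNReal.ofReal (dist z.1 z.2 ^ (α - (n:ℝ))) * ENNReal.ofReal (g z.2)) ∂(μ.prod μ) := by
    rw [lintegral_prod _ hFGm.aemeasurable, hIdef]
    apply lintegral_congr; intro x
    apply lintegral_congr; intro y
    dsimp only
    rw [ENNReal.ofReal_mul (mul_nonneg (hf0 x) (Real.rpow_nonneg dist_nonneg _)),
      ENNReal.ofReal_mul (hf0 x), mul_assoc]
  have hstep2 : ∀ s : ℝ,
      ∫⁻ z in {z : EuclideanSpace ℝ (Fin n) × EuclideanSpace ℝ (Fin n) | s < f z.1},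
        ENNReal.ofReal (dist z.1 z.2 ^ (α - (n:ℝ))) * ENNReal.ofReal (g z.2) ∂(μ.prod μ)
      = ∫⁻ u in Ioi (0:ℝ), ∫⁻ z in (Es s) ×ˢ (Fu u),
          ENNReal.ofReal (dist z.1 z.2 ^ (α - (n:ℝ))) ∂(μ.prod μ) := by
    intro s
    have e1 : ∫⁻ z in {z : EuclideanSpace ℝ (Fin n) × EuclideanSpace ℝ (Fin n) | s < f z.1},
        ENNReal.ofReal (dist z.1 z.2 ^ (α - (n:ℝ))) * ENNReal.ofReal (g z.2) ∂(μ.prod μ)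
        = ∫⁻ z, ENNReal.ofReal (g z.2) *
            ENNReal.ofReal (dist z.1 z.2 ^ (α - (n:ℝ)))
            ∂((μ.prod μ).restrict {z | s < f z.1}) := by
      apply lintegral_congr; intro z; ring
    rw [e1, peel ((μ.prod μ).restrict {z | s < f z.1}) (fun z => g z.2)
      hmsnd (fun z => hg0 _) _ hKm]
    apply lintegral_congr; intro u
    rw [Measure.restrict_restrict (measurableSet_lt measurable_const hmsnd)]
    congr 2
    ext z
    simp only [mem_inter_iff, mem_setOf_eq, Set.mem_prod, hEsdef, hFudef]
    tauto
  have hIJ : I = ∫⁻ s in Ioi (0:ℝ), ∫⁻ u in Ioi (0:ℝ), ∫⁻ z in (Es s) ×ˢ (Fu u),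
      ENNReal.ofReal (dist z.1 z.2 ^ (α - (n:ℝ))) ∂(μ.prod μ) := by
    rw [hprod, peel (μ.prod μ) (fun z => f z.1) hmfst (fun z => hf0 _)
      (fun z => ENNReal.ofReal (dist z.1 z.2 ^ (α - (n:ℝ))) * ENNReal.ofReal (g z.2))
      (hKm.mul hmsnd.ennreal_ofReal)]
    apply lintegral_congr; intro s
    exact hstep2 s
  -- Step B : two kernel bounds on J
  have hJ1 : ∀ s u : ℝ, ENNReal.ofReal c₁ * ((μ (Es s)) ^ γ * μ (Fu u)) ≤
      ∫⁻ z in (Es s) ×ˢ (Fu u), ENNReal.ofReal (dist z.1 z.2 ^ (α - (n:ℝ))) ∂(μ.prod μ) := by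
    intro s u
    rw [← Measure.prod_restrict, lintegral_prod_symm _ hKm.aemeasurable]
    calc ENNReal.ofReal c₁ * ((μ (Es s)) ^ γ * μ (Fu u))
        = ∫⁻ _ in Fu u, ENNReal.ofReal c₁ * (μ (Es s)) ^ γ ∂μ := by
          rw [setLIntegral_const]; ring
      _ ≤ _ := by
          apply lintegral_mono
          intro y
          dsimp only
          exact hker y (Es s)
  have hJ2 : ∀ s u : ℝ, ENNReal.ofReal c₁ * ((μ (Fu u)) ^ γ * μ (Es s)) ≤
      ∫⁻ z in (Es s) ×ˢ (Fu u), ENNReal.ofReal (dist z.1 z.2 ^ (α - (n:ℝ))) ∂(μ.prod μ) := by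
    intro s u
    rw [← Measure.prod_restrict, lintegral_prod _ hKm.aemeasurable]
    calc ENNReal.ofReal c₁ * ((μ (Fu u)) ^ γ * μ (Es s))
        = ∫⁻ _ in Es s, ENNReal.ofReal c₁ * (μ (Fu u)) ^ γ ∂μ := by
          rw [setLIntegral_const]; ring
      _ ≤ _ := by
          apply lintegral_mono
          intro x
          dsimp only
          have h2 : ∫⁻ y in Fu u, ENNReal.ofReal (dist x y ^ (α - (n:ℝ))) ∂μ
              = ∫⁻ y in Fu u, ENNReal.ofReal (dist y x ^ (α - (n:ℝ))) ∂μ := by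
            apply lintegral_congr; intro y; rw [dist_comm]
          rw [h2]
          exact hker x (Fu u)
  -- integrate the bounds
  have hX : ENNReal.ofReal c₁ * (Af * Fg) ≤ I := by
    rw [hIJ]
    calc ENNReal.ofReal c₁ * (Af * Fg)
        = ∫⁻ s in Ioi (0:ℝ), ENNReal.ofReal c₁ * ((μ (Es s)) ^ γ * Fg) := by
          rw [lintegral_const_mul (f := fun s => (μ (Es s)) ^ γ * Fg) _ ((hEsm.pow measurable_const).mul measurable_const),
            lintegral_mul_const _ (hEsm.pow measurable_const), hAfdef]
      _ ≤ _ := by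
          apply lintegral_mono
          intro s
          calc ENNReal.ofReal c₁ * ((μ (Es s)) ^ γ * Fg)
              = ∫⁻ u in Ioi (0:ℝ), ENNReal.ofReal c₁ * ((μ (Es s)) ^ γ * μ (Fu u)) := by
                rw [lintegral_const_mul (f := fun u => (μ (Es s)) ^ γ * μ (Fu u)) _ (measurable_const.mul hFum),
                  lintegral_const_mul _ hFum, hFgdef]
            _ ≤ _ := lintegral_mono (fun u => hJ1 s u)
  have hY : ENNReal.ofReal c₁ * (Ff * Ag) ≤ I := by
    rw [hIJ]
    calc ENNReal.ofReal c₁ * (Ff * Ag)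
        = ∫⁻ s in Ioi (0:ℝ), ENNReal.ofReal c₁ * (μ (Es s) * Ag) := by
          rw [lintegral_const_mul (f := fun s => μ (Es s) * Ag) _ (hEsm.mul measurable_const),
            lintegral_mul_const _ hEsm, hFfdef]
      _ ≤ _ := by
          apply lintegral_mono
          intro s
          calc ENNReal.ofReal c₁ * (μ (Es s) * Ag)
              = ∫⁻ u in Ioi (0:ℝ), ENNReal.ofReal c₁ * ((μ (Fu u)) ^ γ * μ (Es s)) := by
                rw [hAgdef, lintegral_const_mul (f := fun u => (μ (Fu u)) ^ γ * μ (Es s)) _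
                    ((hFum.pow measurable_const).mul measurable_const),
                  lintegral_mul_const _ (hFum.pow measurable_const)]
                ring
            _ ≤ _ := lintegral_mono (fun u => hJ2 s u)
  -- one-variable bounds
  set Lp : ℝ≥0∞ := (∫⁻ x, ENNReal.ofReal (f x) ^ p ∂μ) ^ (1/p) with hLpdef
  set Lt : ℝ≥0∞ := (∫⁻ x, ENNReal.ofReal (g x) ^ t ∂μ) ^ (1/t) with hLtdef
  have honef : ENNReal.ofReal c₂ * Lp ≤ Af ^ θ * Ff ^ (1 - θ) := hone μ f hf hf0
  have honeg : ENNReal.ofReal c₃ * Lt ≤ Ag ^ (1-θ) * Fg ^ θ := by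
    have h := htwo μ g hg hg0
    rw [hθg, show (1:ℝ) - (1 - θ) = θ by ring] at h
    exact h
  -- combine everything
  have hgeom : (ENNReal.ofReal c₁ * (Af * Fg)) ^ θ * (ENNReal.ofReal c₁ * (Ff * Ag)) ^ (1-θ)
      ≤ I := geom_le_of_le hθ0 hθ1 hX hY
  have hcomb : ENNReal.ofReal c₁ * ((Af ^ θ * Ff ^ (1-θ)) * (Ag ^ (1-θ) * Fg ^ θ))
      = (ENNReal.ofReal c₁ * (Af * Fg)) ^ θ * (ENNReal.ofReal c₁ * (Ff * Ag)) ^ (1-θ) := by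
    rw [ENNReal.mul_rpow_of_nonneg _ _ hθ0.le,
      ENNReal.mul_rpow_of_nonneg _ _ (by linarith : (0:ℝ) ≤ 1 - θ),
      ENNReal.mul_rpow_of_nonneg _ _ hθ0.le,
      ENNReal.mul_rpow_of_nonneg _ _ (by linarith : (0:ℝ) ≤ 1 - θ)]
    have hsplit : (ENNReal.ofReal c₁)^θ * (ENNReal.ofReal c₁)^(1-θ) = ENNReal.ofReal c₁ := by
      rw [← ENNReal.rpow_add _ _ (by simpa using hc₁) ENNReal.ofReal_ne_top]
      norm_num
    calc ENNReal.ofReal c₁ * ((Af ^ θ * Ff ^ (1-θ)) * (Ag ^ (1-θ) * Fg ^ θ))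
        = ((ENNReal.ofReal c₁)^θ * (ENNReal.ofReal c₁)^(1-θ)) *
            ((Af ^ θ * Ff ^ (1-θ)) * (Ag ^ (1-θ) * Fg ^ θ)) := by rw [hsplit]
      _ = (ENNReal.ofReal c₁)^θ * (Af ^ θ * Fg ^ θ) *
            ((ENNReal.ofReal c₁)^(1-θ) * (Ff ^ (1-θ) * Ag ^ (1-θ))) := by ring
  -- rewrite the LHS of the goal
  have hIp : (0:ℝ) ≤ ∫ x, |f x| ^ p ∂μ := integral_nonneg (fun x => by positivity)
  have hIt : (0:ℝ) ≤ ∫ x, |g x| ^ t ∂μ := integral_nonneg (fun x => by positivity)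
  have hfp : ENNReal.ofReal ((∫ x, |f x| ^ p ∂μ) ^ (1/p)) = Lp := by
    rw [hLpdef, ← ENNReal.ofReal_rpow_of_nonneg hIp (by positivity)]
    congr 1
    rw [ofReal_integral_eq_lintegral_ofReal hfi
      (Filter.Eventually.of_forall (fun x => by positivity))]
    apply lintegral_congr
    intro x
    rw [abs_of_nonneg (hf0 x), ENNReal.ofReal_rpow_of_nonneg (hf0 x) hp0.le]
  have hgp : ENNReal.ofReal ((∫ x, |g x| ^ t ∂μ) ^ (1/t)) = Lt := by
    rw [hLtdef, ← ENNReal.ofReal_rpow_of_nonneg hIt (by positivity)]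
    congr 1
    rw [ofReal_integral_eq_lintegral_ofReal hgi
      (Filter.Eventually.of_forall (fun x => by positivity))]
    apply lintegral_congr
    intro x
    rw [abs_of_nonneg (hg0 x), ENNReal.ofReal_rpow_of_nonneg (hg0 x) ht0.le]
  calc ENNReal.ofReal (c₁ * c₂ * c₃ * (∫ x, |f x| ^ p ∂μ) ^ (1/p) * (∫ x, |g x| ^ t ∂μ) ^ (1/t))
      = ENNReal.ofReal c₁ * ((ENNReal.ofReal c₂ * Lp) * (ENNReal.ofReal c₃ * Lt)) := by
        rw [ENNReal.ofReal_mul (by positivity), ENNReal.ofReal_mul (by positivity),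
          ENNReal.ofReal_mul (by positivity), ENNReal.ofReal_mul (by positivity),
          hfp, hgp]
        ring
    _ ≤ ENNReal.ofReal c₁ * ((Af ^ θ * Ff ^ (1-θ)) * (Ag ^ (1-θ) * Fg ^ θ)) :=
        mul_le_mul_right (mul_le_mul' honef honeg) _
    _ = (ENNReal.ofReal c₁ * (Af * Fg)) ^ θ * (ENNReal.ofReal c₁ * (Ff * Ag)) ^ (1-θ) := hcomb
    _ ≤ I := hgeom

end ReversedHLSMain
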